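/- If A is a real n×n matrix with nonnegative off-diagonal entries, then the spectral bound s(A) = max{Re λ : λ ∈ spectrum(A)} is itself an eigenvalue of A. -/

import Mathlib

open Matrix Filter

attribute [local instance] Matrix.linftyOpNormedRing Matrix.linftyOpNormedAlgebra

section PerronFrobeniusAux

variable {n : ℕ}

lemma entry_nnnorm_le (N : Matrix (Fin n) (Fin n) ℂ) (i j : Fin n) : ‖N i j‖₊ ≤ ‖N‖₊ := by
  rw [Matrix.linfty_opNNNorm_def]
  exact le_trans (Finset.single_le_sum (f := fun j => ‖N i j‖₊) (fun _ _ => zero_le)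
    (Finset.mem_univ j)) (Finset.le_sup (f := fun i => ∑ j, ‖N i j‖₊) (Finset.mem_univ i))

lemma norm_le_of_entries {N N' : Matrix (Fin n) (Fin n) ℂ}
    (h : ∀ i j, ‖N i j‖ ≤ ‖N' i j‖) : ‖N‖ ≤ ‖N'‖ := by
  have : ‖N‖₊ ≤ ‖N'‖₊ := by
    rw [Matrix.linfty_opNNNorm_def, Matrix.linfty_opNNNorm_def]
    refine Finset.sup_mono_fun fun i _ => Finset.sum_le_sum fun j _ => ?_
    exact h i j
  exact this

/-- entry evaluation as a continuous linear map -/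
noncomputable def entryCLM (i j : Fin n) : Matrix (Fin n) (Fin n) ℂ →L[ℂ] ℂ :=
  LinearMap.mkContinuous
    { toFun := fun N => N i j
      map_add' := fun _ _ => rfl
      map_smul' := fun _ _ => rfl } 1
    (fun N => by rw [one_mul]; exact NNReal.coe_le_coe.mpr (entry_nnnorm_le N i j))

@[simp] lemma entryCLM_apply (i j : Fin n) (N : Matrix (Fin n) (Fin n) ℂ) :
    entryCLM i j N = N i j := rfl

lemma pow_entry_nonneg {B : Matrix (Fin n) (Fin n) ℝ} (hB : ∀ i j, 0 ≤ B i j) :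
    ∀ (k : ℕ) (i j : Fin n), 0 ≤ (B ^ k) i j := by
  intro k
  induction k with
  | zero => intro i j; by_cases h : i = j <;> simp [pow_zero, Matrix.one_apply, h]
  | succ k ih =>
    intro i j
    rw [pow_succ, Matrix.mul_apply]
    exact Finset.sum_nonneg fun l _ => mul_nonneg (ih i l) (hB l j)

lemma map_pow_entry (B : Matrix (Fin n) (Fin n) ℝ) (k : ℕ) (i j : Fin n) :
    ((B.map (fun r => (r : ℂ))) ^ k) i j = ((B ^ k) i j : ℂ) := by
  have : B.map (fun r => (r : ℂ)) = (Complex.ofRealHom).mapMatrix B := rfl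
  rw [this, ← map_pow]
  rfl

/-- summability of the resolvent series beyond the spectral radius -/
lemma summable_res (M : Matrix (Fin n) (Fin n) ℂ) {z : ℂ}
    (hz : spectralRadius ℂ M < ‖z‖₊) :
    Summable (fun k : ℕ => z⁻¹ ^ (k + 1) • M ^ k) := by
  obtain ⟨r', hr1, hr2⟩ := ENNReal.lt_iff_exists_nnreal_btwn.mp hz
  have hgel := spectrum.pow_nnnorm_pow_one_div_tendsto_nhds_spectralRadius M
  have hev : ∀ᶠ k : ℕ in atTop, (‖M ^ k‖₊ : ENNReal) ^ (1 / (k:ℝ)) < (r' : ENNReal) :=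
    hgel.eventually_lt_const hr1
  have hz0 : (0:ℝ) < ‖z‖ := by
    have : (0:ENNReal) < ‖z‖₊ := lt_of_le_of_lt zero_le hz
    simpa [norm_pos_iff] using this
  have hrz : (r' : ℝ) < ‖z‖ := by
    have := hr2
    rw [ENNReal.coe_lt_coe] at this
    exact_mod_cast this
  have hbound : ∀ᶠ k : ℕ in atTop, ‖z⁻¹ ^ (k + 1) • M ^ k‖ ≤ ‖z‖⁻¹ * ((r':ℝ) / ‖z‖) ^ k := by
    filter_upwards [hev, eventually_ge_atTop 1] with k hk hk1
    have hk0 : (k:ℝ) ≠ 0 := by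
      exact_mod_cast Nat.one_le_iff_ne_zero.mp hk1
    have hMk : ‖M ^ k‖ ≤ (r':ℝ) ^ k := by
      have h1 : (‖M ^ k‖₊ : ENNReal) ≤ ((r':ENNReal)) ^ (k:ℝ) := by
        calc (‖M ^ k‖₊ : ENNReal) = ((‖M ^ k‖₊ : ENNReal) ^ (1/(k:ℝ))) ^ (k:ℝ) := by
              rw [← ENNReal.rpow_mul, one_div, inv_mul_cancel₀ hk0, ENNReal.rpow_one]
          _ ≤ _ := ENNReal.rpow_le_rpow hk.le (by positivity)
      rw [ENNReal.rpow_natCast, ← ENNReal.coe_pow, ENNReal.coe_le_coe] at h1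
      exact_mod_cast h1
    have : ‖z⁻¹ ^ (k + 1) • M ^ k‖ = ‖z‖⁻¹ ^ (k+1) * ‖M ^ k‖ := by
      rw [norm_smul, norm_pow, norm_inv]
    rw [this, pow_succ]
    calc ‖z‖⁻¹ ^ k * ‖z‖⁻¹ * ‖M ^ k‖ ≤ ‖z‖⁻¹ ^ k * ‖z‖⁻¹ * (r':ℝ) ^ k := by
          gcongr
      _ = ‖z‖⁻¹ * ((r':ℝ) / ‖z‖) ^ k := by rw [div_pow, div_eq_mul_inv, inv_pow]; ring
  refine Summable.of_norm_bounded_eventually (Summable.mul_left _ ?_) (Nat.cofinite_eq_atTop ▸ hbound)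
  refine summable_geometric_of_lt_one (by positivity) ?_
  rw [div_lt_one hz0]; exact hrz

lemma isUnit_res (M : Matrix (Fin n) (Fin n) ℂ) {z : ℂ}
    (hz : spectralRadius ℂ M < ‖z‖₊) :
    IsUnit (algebraMap ℂ (Matrix (Fin n) (Fin n) ℂ) z - M) :=
  spectrum.mem_resolventSet_iff.mp (spectrum.mem_resolventSet_of_spectralRadius_lt hz)

lemma inverse_eq_tsum (M : Matrix (Fin n) (Fin n) ℂ) {z : ℂ}
    (hz : spectralRadius ℂ M < ‖z‖₊) :
    Ring.inverse (algebraMap ℂ (Matrix (Fin n) (Fin n) ℂ) z - M)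
      = ∑' k : ℕ, z⁻¹ ^ (k + 1) • M ^ k := by
  have hu := isUnit_res M hz
  have hsum := summable_res M hz
  have hz0 : z ≠ 0 := by
    intro h
    rw [h] at hz
    simp at hz
  rw [← hu.unit_spec, Ring.inverse_unit]
  set f : ℕ → Matrix (Fin n) (Fin n) ℂ := fun k => z⁻¹ ^ (k + 1) • M ^ k with hf
  set a : Matrix (Fin n) (Fin n) ℂ := algebraMap ℂ _ z - M with ha
  set S := ∑' k, f k with hS
  have hSsum : HasSum f S := hsum.hasSum
  have h2 : HasSum (fun k => f k * a) (S * a) := hSsum.mul_right a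
  have hterm : ∀ k : ℕ, f k * a = z⁻¹ ^ k • M ^ k - z⁻¹ ^ (k+1) • M ^ (k+1) := by
    intro k
    simp only [hf, ha, mul_sub, Algebra.algebraMap_eq_smul_one, mul_smul_comm, mul_one,
      smul_smul, ← pow_succ]
    rw [smul_mul_assoc, ← pow_succ]
    congr 1
    rw [pow_succ, mul_comm (z⁻¹ ^ k), ← mul_assoc, mul_inv_cancel₀ hz0, one_mul]
  have hg0 : Tendsto (fun k : ℕ => z⁻¹ ^ k • M ^ k) atTop (nhds 0) := by
    have := hsum.tendsto_atTop_zero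
    have h3 : Tendsto (fun k : ℕ => z • (z⁻¹ ^ (k+1) • M ^ k)) atTop (nhds (z • 0)) :=
      this.const_smul z
    simp only [smul_zero] at h3
    convert h3 using 2 with k
    rw [smul_smul, pow_succ, mul_comm (z⁻¹ ^ k), ← mul_assoc, mul_inv_cancel₀ hz0, one_mul]
  have hpart : Tendsto (fun m : ℕ => ∑ k ∈ Finset.range m, (f k * a)) atTop (nhds 1) := by
    have : ∀ m : ℕ, ∑ k ∈ Finset.range m, (f k * a)
        = 1 - z⁻¹ ^ m • M ^ m := by
      intro m
      simp only [hterm]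
      rw [Finset.sum_range_sub' (fun k => z⁻¹ ^ k • M ^ k)]
      simp
    simp only [this]
    simpa using (tendsto_const_nhds (x := (1 : Matrix (Fin n) (Fin n) ℂ))).sub hg0
  have hSa : S * a = 1 := tendsto_nhds_unique h2.tendsto_sum_nat hpart
  have : S = ↑(hu.unit⁻¹) := by
    calc S = S * (a * ↑(hu.unit⁻¹)) := by rw [hu.mul_val_inv, mul_one]
      _ = (S * a) * ↑(hu.unit⁻¹) := by rw [mul_assoc]
      _ = ↑(hu.unit⁻¹) := by rw [hSa, one_mul]
  exact this.symm

/-- Perron-Frobenius: for an entrywise nonnegative real matrix, the spectral radius is an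
eigenvalue of the complexification. -/
theorem pf (hn : 0 < n) (B : Matrix (Fin n) (Fin n) ℝ) (hB : ∀ i j, 0 ≤ B i j) :
    (((spectralRadius ℂ (B.map (fun r => (r : ℂ)))).toReal : ℂ))
      ∈ spectrum ℂ (B.map (fun r => (r : ℂ))) := by
  haveI : NeZero n := ⟨hn.ne'⟩
  set M := B.map (fun r => (r : ℂ)) with hM
  have hrad_ne_top : spectralRadius ℂ M ≠ ⊤ :=
    ((spectrum.spectralRadius_le_nnnorm (𝕜 := ℂ) M).trans_lt ENNReal.coe_lt_top).ne
  set ρ : ℝ := (spectralRadius ℂ M).toReal with hρdef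
  obtain ⟨μ, hμσ, hμρ⟩ := spectrum.exists_nnnorm_eq_spectralRadius (a := M)
  have hμnorm : ‖μ‖ = ρ := by
    rw [hρdef, ← hμρ, ENNReal.coe_toReal, coe_nnnorm]
  have hρ0 : 0 ≤ ρ := ENNReal.toReal_nonneg
  by_contra hcon
  have hρpos : 0 < ρ := by
    rcases hρ0.lt_or_eq with h | h
    · exact h
    · exfalso
      apply hcon
      have : μ = 0 := by
        rw [← norm_eq_zero, hμnorm, ← h]
      rw [← h, Complex.ofReal_zero, ← this]
      exact hμσ
  have key : ∀ z : ℂ, ρ < ‖z‖ → spectralRadius ℂ M < ‖z‖₊ := fun z h => by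
    rw [← ENNReal.ofReal_coe_nnreal, coe_nnnorm]
    exact (ENNReal.lt_ofReal_iff_toReal_lt hrad_ne_top).mpr h
  -- entrywise bound for the resolvent
  have entrybound : ∀ t : ℝ, ρ < t → ∀ z : ℂ, ‖z‖ = t →
      ‖Ring.inverse (algebraMap ℂ (Matrix (Fin n) (Fin n) ℂ) z - M)‖
        ≤ ‖Ring.inverse (algebraMap ℂ (Matrix (Fin n) (Fin n) ℂ) ((t:ℂ)) - M)‖ := by
    intro t ht z hzt
    have htpos : 0 < t := lt_of_le_of_lt hρ0 ht
    have hznorm : ρ < ‖z‖ := hzt ▸ ht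
    have htnorm : ρ < ‖(t:ℂ)‖ := by
      rw [Complex.norm_real, Real.norm_of_nonneg htpos.le]; exact ht
    have hz' := key z hznorm
    have ht' := key _ htnorm
    refine norm_le_of_entries fun i j => ?_
    -- series for both entries
    have hsz : HasSum (fun k : ℕ => z⁻¹ ^ (k+1) * ((B ^ k) i j : ℂ))
        ((Ring.inverse (algebraMap ℂ (Matrix (Fin n) (Fin n) ℂ) z - M)) i j) := by
      have := ((summable_res M hz').hasSum.mapL (entryCLM i j))
      rw [← inverse_eq_tsum M hz'] at this
      simpa only [hM, Matrix.smul_apply, smul_eq_mul, map_pow_entry, inv_pow, entryCLM_apply] using this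
    have hst : HasSum (fun k : ℕ => (t:ℂ)⁻¹ ^ (k+1) * ((B ^ k) i j : ℂ))
        ((Ring.inverse (algebraMap ℂ (Matrix (Fin n) (Fin n) ℂ) ((t:ℂ)) - M)) i j) := by
      have := ((summable_res M ht').hasSum.mapL (entryCLM i j))
      rw [← inverse_eq_tsum M ht'] at this
      simpa only [hM, Matrix.smul_apply, smul_eq_mul, map_pow_entry, inv_pow, entryCLM_apply] using this
    set b : ℕ → ℝ := fun k => t⁻¹ ^ (k+1) * ((B ^ k) i j) with hb
    have hcast : ∀ k : ℕ, (t:ℂ)⁻¹ ^ (k+1) * ((B ^ k) i j : ℂ) = ((b k : ℝ) : ℂ) := by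
      intro k; push_cast [hb]; ring
    have hstre : HasSum b ((Ring.inverse (algebraMap ℂ (Matrix (Fin n) (Fin n) ℂ) ((t:ℂ)) - M)) i j).re := by
      have := hst
      simp only [hcast] at this
      have h2 := (Complex.hasSum_iff _ _).mp this
      simpa using h2.1
    have hbnonneg : ∀ k, 0 ≤ b k := fun k =>
      mul_nonneg (by positivity) (pow_entry_nonneg hB k i j)
    have hnormterm : ∀ k : ℕ, ‖z⁻¹ ^ (k+1) * ((B ^ k) i j : ℂ)‖ = b k := by
      intro k
      rw [norm_mul, norm_pow, norm_inv, hzt, hb]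
      simp [Complex.norm_real, abs_of_nonneg (pow_entry_nonneg hB k i j)]
    calc ‖(Ring.inverse (algebraMap ℂ (Matrix (Fin n) (Fin n) ℂ) z - M)) i j‖
        ≤ ∑' k, ‖z⁻¹ ^ (k+1) * ((B ^ k) i j : ℂ)‖ := by
          rw [← hsz.tsum_eq]
          exact norm_tsum_le_tsum_norm (by simpa only [hnormterm] using hstre.summable)
      _ = ∑' k, b k := by simp only [hnormterm]
      _ = ((Ring.inverse (algebraMap ℂ (Matrix (Fin n) (Fin n) ℂ) ((t:ℂ)) - M)) i j).re :=
          hstre.tsum_eq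
      _ ≤ ‖(Ring.inverse (algebraMap ℂ (Matrix (Fin n) (Fin n) ℂ) ((t:ℂ)) - M)) i j‖ := by
          exact Complex.re_le_norm _
  -- ρ in the resolvent set: resolvent continuous there
  have huρ : IsUnit (algebraMap ℂ (Matrix (Fin n) (Fin n) ℂ) ((ρ:ℂ)) - M) :=
    spectrum.notMem_iff.mp hcon
  have hcont : ContinuousAt
      (fun u : ℝ => Ring.inverse (algebraMap ℂ (Matrix (Fin n) (Fin n) ℂ) ((u:ℂ)) - M)) ρ := by
    have h1 : Continuous (fun u : ℝ => algebraMap ℂ (Matrix (Fin n) (Fin n) ℂ) ((u:ℂ)) - M) :=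
      ((continuous_algebraMap ℂ (Matrix (Fin n) (Fin n) ℂ)).comp
        Complex.continuous_ofReal).sub continuous_const
    have h2 : ContinuousAt Ring.inverse
        (algebraMap ℂ (Matrix (Fin n) (Fin n) ℂ) ((ρ:ℂ)) - M) := by
      have := NormedRing.inverse_continuousAt huρ.unit
      rwa [huρ.unit_spec] at this
    exact ContinuousAt.comp (g := Ring.inverse) h2 h1.continuousAt
  set Fρ := Ring.inverse (algebraMap ℂ (Matrix (Fin n) (Fin n) ℂ) ((ρ:ℂ)) - M) with hFρ
  set K : ℝ := ‖Fρ‖ + 1 with hK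
  have hKpos : 0 < K := by positivity
  obtain ⟨δ, hδpos, hδ⟩ := Metric.continuousAt_iff.mp hcont 1 one_pos
  set ε : ℝ := min (δ/2) (1/(2*K)) with hε
  have hεpos : 0 < ε := lt_min (by positivity) (by positivity)
  set t : ℝ := ρ + ε with htdef
  have ht : ρ < t := lt_add_of_pos_right _ hεpos
  have htd : dist t ρ < δ := by
    rw [Real.dist_eq, htdef, add_sub_cancel_left, abs_of_pos hεpos]
    exact lt_of_le_of_lt (min_le_left _ _) (by linarith)
  have hFt : ‖Ring.inverse (algebraMap ℂ (Matrix (Fin n) (Fin n) ℂ) ((t:ℂ)) - M)‖ ≤ K := by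
    have h3 := hδ htd
    rw [dist_eq_norm] at h3
    calc ‖Ring.inverse (algebraMap ℂ (Matrix (Fin n) (Fin n) ℂ) ((t:ℂ)) - M)‖
        = ‖(Ring.inverse (algebraMap ℂ (Matrix (Fin n) (Fin n) ℂ) ((t:ℂ)) - M) - Fρ) + Fρ‖ := by
          rw [sub_add_cancel]
      _ ≤ ‖Ring.inverse (algebraMap ℂ (Matrix (Fin n) (Fin n) ℂ) ((t:ℂ)) - M) - Fρ‖ + ‖Fρ‖ :=
          norm_add_le _ _
      _ ≤ 1 + ‖Fρ‖ := by gcongr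
      _ = K := by rw [hK]; ring
  set z : ℂ := ((t/ρ : ℝ) : ℂ) * μ with hzdef
  have hznorm : ‖z‖ = t := by
    rw [hzdef, norm_mul, Complex.norm_real, Real.norm_of_nonneg (by positivity), hμnorm]
    field_simp
  have hzρ : ρ < ‖z‖ := hznorm ▸ ht
  have hz' := key z hzρ
  have huz := isUnit_res M hz'
  set Rz := Ring.inverse (algebraMap ℂ (Matrix (Fin n) (Fin n) ℂ) z - M) with hRzdef
  have hRzK : ‖Rz‖ ≤ K := (entrybound t ht z hznorm).trans hFt
  have hzmunorm : ‖z - μ‖ = t - ρ := by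
    have hzmu : z - μ = (((t/ρ - 1 : ℝ)):ℂ) * μ := by rw [hzdef]; push_cast; ring
    have h4 : (0:ℝ) ≤ t/ρ - 1 := by
      rw [sub_nonneg, le_div_iff₀ hρpos, one_mul]; exact ht.le
    rw [hzmu, norm_mul, Complex.norm_real, Real.norm_of_nonneg h4, hμnorm]
    field_simp
  have hsmall : ‖(z - μ) • Rz‖ < 1 := by
    rw [norm_smul, hzmunorm]
    have htε : t - ρ = ε := by rw [htdef]; ring
    calc (t-ρ)*‖Rz‖ ≤ ε * K := by rw [htε]; gcongr
      _ ≤ (1/(2*K))*K := by gcongr; exact min_le_right _ _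
      _ < 1 := by rw [div_mul_eq_mul_div, one_mul, div_lt_one (by positivity)]; linarith
  have hmulinv : (algebraMap ℂ (Matrix (Fin n) (Fin n) ℂ) z - M) * Rz = 1 := by
    rw [hRzdef, ← huz.unit_spec, Ring.inverse_unit]
    exact Units.mul_inv _
  have hfac : algebraMap ℂ (Matrix (Fin n) (Fin n) ℂ) μ - M
      = (algebraMap ℂ (Matrix (Fin n) (Fin n) ℂ) z - M) * (1 - (z - μ) • Rz) := by
    rw [mul_sub, mul_one, mul_smul_comm, hmulinv]
    simp only [Algebra.algebraMap_eq_smul_one]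
    rw [sub_right_comm, ← sub_smul]
    have h5 : z - (z - μ) = μ := by ring
    rw [h5]
  have hunit_mu : IsUnit (algebraMap ℂ (Matrix (Fin n) (Fin n) ℂ) μ - M) := by
    rw [hfac]
    exact huz.mul (Units.oneSub _ hsmall).isUnit
  exact spectrum.notMem_iff.mpr hunit_mu hμσ

end PerronFrobeniusAux

/-- If `A` is a real `n×n` matrix (`n ≥ 1`) with nonnegative off-diagonal
entries, then the spectral bound `s(A) = max {Re λ : λ ∈ spectrum A}` is itself an
eigenvalue of `A`. -/
theorem spectral_bound_is_eigenvalue (n : ℕ) (hn : 0 < n)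
    (A : Matrix (Fin n) (Fin n) ℝ)
    (hoff : ∀ i j, i ≠ j → 0 ≤ A i j)
    (s : ℝ)
    (hs : IsGreatest {x : ℝ | ∃ μ ∈ spectrum ℂ (A.map (fun r => (r : ℂ))), x = μ.re} s) :
    (s : ℂ) ∈ spectrum ℂ (A.map (fun r => (r : ℂ))) := by
  classical
  haveI : NeZero n := ⟨hn.ne'⟩
  set c : ℝ := ∑ i, |A i i| with hc
  set B : Matrix (Fin n) (Fin n) ℝ := A + c • (1 : Matrix (Fin n) (Fin n) ℝ) with hBdef
  have hB : ∀ i j, 0 ≤ B i j := by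
    intro i j
    rw [hBdef]
    by_cases h : i = j
    · subst h
      have h1 : |A i i| ≤ c := Finset.single_le_sum (f := fun i => |A i i|)
        (fun _ _ => abs_nonneg _) (Finset.mem_univ i)
      simp only [Matrix.add_apply, Matrix.smul_apply, Matrix.one_apply_eq, smul_eq_mul, mul_one]
      have := neg_abs_le (A i i)
      linarith
    · simp only [Matrix.add_apply, Matrix.smul_apply, Matrix.one_apply_ne h, smul_eq_mul,
        mul_zero, add_zero]
      exact hoff i j h
  have hmap : B.map (fun r => (r : ℂ))
      = A.map (fun r => (r : ℂ)) + algebraMap ℂ (Matrix (Fin n) (Fin n) ℂ) ((c : ℂ)) := by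
    ext i j
    by_cases h : i = j <;>
      simp [hBdef, Matrix.map_apply, Matrix.add_apply, Matrix.smul_apply, Matrix.one_apply,
        Algebra.algebraMap_eq_smul_one, h]
  have hspec : spectrum ℂ (B.map (fun r => (r : ℂ)))
      = (fun μ : ℂ => μ + (c : ℂ)) '' spectrum ℂ (A.map (fun r => (r : ℂ))) := by
    rw [hmap, ← spectrum.add_singleton_eq, Set.add_singleton]
  have hPF := pf hn B hB
  set ρ : ℝ := (spectralRadius ℂ (B.map (fun r => (r : ℂ)))).toReal with hρ
  rw [hspec] at hPF
  obtain ⟨μ₁, hμ₁σ, hμ₁⟩ := hPF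
  -- μ₁ = ρ - c
  have hμ₁val : μ₁ = ((ρ - c : ℝ) : ℂ) := by
    have : μ₁ = (ρ:ℂ) - (c:ℂ) := by rw [← hμ₁]; ring
    rw [this]; push_cast; ring
  -- upper bound : ρ - c ≤ s
  have hub : ρ - c ≤ s := by
    refine hs.2 ?_
    exact ⟨μ₁, hμ₁σ, by rw [hμ₁val, Complex.ofReal_re]⟩
  -- lower bound : s ≤ ρ - c
  have hlb : s ≤ ρ - c := by
    obtain ⟨μ₀, hμ₀σ, hμ₀re⟩ := hs.1
    have hmem : μ₀ + (c:ℂ) ∈ spectrum ℂ (B.map (fun r => (r : ℂ))) := by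
      rw [hspec]; exact ⟨μ₀, hμ₀σ, rfl⟩
    have h1 : (‖μ₀ + (c:ℂ)‖₊ : ENNReal) ≤ spectralRadius ℂ (B.map (fun r => (r : ℂ))) :=
      le_iSup₂ (f := fun k (_ : k ∈ spectrum ℂ (B.map (fun r => (r : ℂ)))) => (‖k‖₊ : ENNReal))
        _ hmem
    have hne : spectralRadius ℂ (B.map (fun r => (r : ℂ))) ≠ ⊤ :=
      ((spectrum.spectralRadius_le_nnnorm (𝕜 := ℂ) _).trans_lt ENNReal.coe_lt_top).ne
    have h2 : ‖μ₀ + (c:ℂ)‖ ≤ ρ := by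
      rw [hρ]
      have := ENNReal.toReal_mono hne h1
      simpa using this
    have h3 : (μ₀ + (c:ℂ)).re ≤ ‖μ₀ + (c:ℂ)‖ := by
      exact Complex.re_le_norm _
    have h4 : (μ₀ + (c:ℂ)).re = s + c := by
      rw [Complex.add_re, Complex.ofReal_re, hμ₀re]
    linarith
  have hsval : s = ρ - c := le_antisymm hlb hub
  rw [hsval, ← hμ₁val]
  exact hμ₁σ
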